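/- Round-trip property: if a distributed configuration over firewalls F is exactly the result of deploying an anomaly-free global rule set R via the deployment strategy (permissions replicated along minimal routes, prohibitions placed only at the first firewall of the minimal route), then the end-to-end filtering semantics of the distributed configuration coincides with the semantics of R: a packet from zone z1 to zone z2 is delivered iff some accept rule of R matches it, and blocked iff some deny rule of R matches it or no rule matches it. -/

import Mathlib

/-- A filtering rule: a match set over a packet space together with a
decision (`true` = accept, `false` = deny). -/
structure FwRule (P : Type*) where
  mtch : Set P
  dec : Bool

/-- The restriction `r'` of a rule `r` to source zone `z1` and destination
zone `z2`: it matches exactly the packets of `r` from `z1` to `z2`. -/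
def restrictRule {Z P : Type*} (src dst : P → Z) (r : FwRule P) (z1 z2 : Z) :
    FwRule P :=
  ⟨r.mtch ∩ {p | src p = z1 ∧ dst p = z2}, r.dec⟩

open Classical in
/-- First-match semantics with default deny: a packet is accepted by a local
rule list iff the first matching rule has decision accept. -/
noncomputable def firstMatch {P : Type*} : List (FwRule P) → P → Option Bool
  | [], _ => none
  | r :: rs, pkt => if pkt ∈ r.mtch then some r.dec else firstMatch rs pkt


lemma fm_none {P : Type*} (l : List (FwRule P)) (pkt : P)
    (h : ∀ r ∈ l, pkt ∉ r.mtch) : firstMatch l pkt = none := by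
  induction l with
  | nil => rfl
  | cons a t ih =>
    simp only [firstMatch]
    rw [if_neg (h a List.mem_cons_self)]
    exact ih fun r hr => h r (List.mem_cons_of_mem a hr)

lemma fm_some {P : Type*} (l : List (FwRule P)) (pkt : P) (b : Bool)
    (hex : ∃ r ∈ l, pkt ∈ r.mtch) (hall : ∀ r ∈ l, pkt ∈ r.mtch → r.dec = b) :
    firstMatch l pkt = some b := by
  induction l with
  | nil => obtain ⟨r, hr, _⟩ := hex; exact absurd hr List.not_mem_nil
  | cons a t ih =>
    simp only [firstMatch]
    by_cases hm : pkt ∈ a.mtch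
    · rw [if_pos hm, hall a List.mem_cons_self hm]
    · rw [if_neg hm]
      obtain ⟨r, hr, hrm⟩ := hex
      rcases List.mem_cons.mp hr with h1 | h1
      · exact absurd hrm (h1 ▸ hm)
      · exact ih ⟨r, h1, hrm⟩ fun r hr hm => hall r (List.mem_cons_of_mem a hr) hm

/-- round-trip property: if the distributed configuration is
exactly the result of deploying an anomaly-free global rule set `R`
(permissions replicated along minimal routes, prohibitions only at the first
firewall of the minimal route), then a packet from `z1` to `z2` (`z1 ≠ z2`) is
delivered end-to-end (accepted, under first-match with default deny, by every
firewall of `MR z1 z2`) iff some accept rule of `R` matches it, and blocked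
iff some deny rule of `R` matches it or no rule of `R` matches it. -/
theorem deployment_round_trip {F Z P : Type*}
    (src dst : P → Z) (MR : Z → Z → List F)
    (hMR : ∀ z1 z2 : Z, z1 ≠ z2 → MR z1 z2 ≠ [])
    (R : List (FwRule P))
    (hdisj : R.Pairwise fun a b => a.mtch ∩ b.mtch = ∅)
    (hzones : ∀ r ∈ R, ∃ z1 z2 : Z, z1 ≠ z2 ∧
        r.mtch ⊆ {p | src p = z1 ∧ dst p = z2})
    (deployedList : F → List (FwRule P))
    (hchar : ∀ (f : F) (r' : FwRule P), r' ∈ deployedList f ↔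
        ∃ r ∈ R, ∃ z1 z2 : Z, r' = restrictRule src dst r z1 z2 ∧
          ((r.dec = true ∧ f ∈ MR z1 z2) ∨
           (r.dec = false ∧ (MR z1 z2).head? = some f))) :
    ∀ pkt : P, src pkt ≠ dst pkt →
      ((∀ f ∈ MR (src pkt) (dst pkt), firstMatch (deployedList f) pkt = some true) ↔
          ∃ r ∈ R, r.dec = true ∧ pkt ∈ r.mtch) ∧
      ((¬ ∀ f ∈ MR (src pkt) (dst pkt), firstMatch (deployedList f) pkt = some true) ↔
          ((∃ r ∈ R, r.dec = false ∧ pkt ∈ r.mtch) ∨ ∀ r ∈ R, pkt ∉ r.mtch)) := by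

  intro pkt hne
  -- uniqueness of matching rule
  have huniq : ∀ r ∈ R, ∀ r' ∈ R, pkt ∈ r.mtch → pkt ∈ r'.mtch → r = r' := by
    intro r hr r' hr' h1 h2
    by_contra hneq
    have hsym : Symmetric (fun (a b : FwRule P) => a.mtch ∩ b.mtch = ∅) := by
      intro a b hab; rw [Set.inter_comm]; exact hab
    haveI : Std.Symm (fun (a b : FwRule P) => a.mtch ∩ b.mtch = ∅) := ⟨hsym⟩
    have := List.Pairwise.forall hdisj hr hr' hneq
    exact absurd this (by
      intro h
      have : pkt ∈ r.mtch ∩ r'.mtch := ⟨h1, h2⟩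
      rw [h] at this; exact this)
  -- every matching deployed rule at any f has dec equal to the global rule's dec
  have hdec : ∀ (f : F) (r'' : FwRule P), r'' ∈ deployedList f → pkt ∈ r''.mtch →
      ∃ r ∈ R, pkt ∈ r.mtch ∧ r''.dec = r.dec := by
    intro f r'' hmem hm
    obtain ⟨r, hr, z1, z2, heq, _⟩ := (hchar f r'').mp hmem
    refine ⟨r, hr, ?_, ?_⟩
    · have : pkt ∈ (restrictRule src dst r z1 z2).mtch := heq ▸ hm
      exact this.1
    · rw [heq]; rfl
  by_cases hexmatch : ∃ r ∈ R, pkt ∈ r.mtch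
  · obtain ⟨r, hr, hrm⟩ := hexmatch
    obtain ⟨z1, z2, hz12, hsub⟩ := hzones r hr
    have hz1 : src pkt = z1 := (hsub hrm).1
    have hz2 : dst pkt = z2 := (hsub hrm).2
    have hne' : MR (src pkt) (dst pkt) ≠ [] := by
      rw [hz1, hz2]; exact hMR z1 z2 hz12
    -- all matching deployed rules have dec = r.dec
    have hdecr : ∀ (f : F) (r'' : FwRule P), r'' ∈ deployedList f → pkt ∈ r''.mtch →
        r''.dec = r.dec := by
      intro f r'' hmem hm
      obtain ⟨r', hr', hm', hd⟩ := hdec f r'' hmem hm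
      rw [hd, huniq r' hr' r hr hm' hrm]
    have hmemrestrict : pkt ∈ (restrictRule src dst r z1 z2).mtch :=
      ⟨hrm, hz1, hz2⟩
    cases hd : r.dec with
    | true =>
      have hall : ∀ f ∈ MR (src pkt) (dst pkt), firstMatch (deployedList f) pkt = some true := by
        intro f hf
        have hmem : restrictRule src dst r z1 z2 ∈ deployedList f := by
          rw [hchar]
          exact ⟨r, hr, z1, z2, rfl, Or.inl ⟨hd, by rwa [hz1, hz2] at hf⟩⟩
        exact fm_some _ _ _ ⟨_, hmem, hmemrestrict⟩
          (fun r'' h1 h2 => (hdecr f r'' h1 h2).trans hd)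
      constructor
      · exact ⟨fun _ => ⟨r, hr, hd, hrm⟩, fun _ => hall⟩
      · constructor
        · intro h; exact absurd hall h
        · rintro (⟨r', hr', hd', hm'⟩ | hnone)
          · have := huniq r' hr' r hr hm' hrm
            rw [this, hd] at hd'; exact absurd hd' (by simp)
          · exact absurd hrm (hnone r hr)
    | false =>
      have hf0 : (MR z1 z2).head? = some ((MR z1 z2).head (hMR z1 z2 hz12)) :=
        List.head?_eq_head _
      set f0 := (MR z1 z2).head (hMR z1 z2 hz12) with hf0def
      have hf0mem : f0 ∈ MR z1 z2 := List.mem_of_mem_head? hf0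
      have hmem : restrictRule src dst r z1 z2 ∈ deployedList f0 := by
        rw [hchar]
        exact ⟨r, hr, z1, z2, rfl, Or.inr ⟨hd, hf0⟩⟩
      have hfm : firstMatch (deployedList f0) pkt = some false :=
        fm_some _ _ _ ⟨_, hmem, hmemrestrict⟩
          (fun r'' h1 h2 => (hdecr f0 r'' h1 h2).trans hd)
      have hnot : ¬ ∀ f ∈ MR (src pkt) (dst pkt),
          firstMatch (deployedList f) pkt = some true := by
        intro h
        have := h f0 (by rwa [hz1, hz2])
        rw [hfm] at this
        exact absurd this (by simp)
      constructor
      · constructor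
        · intro h; exact absurd h hnot
        · rintro ⟨r', hr', hd', hm'⟩
          have := huniq r' hr' r hr hm' hrm
          rw [this, hd] at hd'
          exact absurd hd' (by simp)
      · exact ⟨fun _ => Or.inl ⟨r, hr, hd, hrm⟩, fun _ => hnot⟩
  · -- no rule matches
    push_neg at hexmatch
    have hnonef : ∀ f : F, firstMatch (deployedList f) pkt = none := by
      intro f
      apply fm_none
      intro r'' hmem hm
      obtain ⟨r', hr', hm', _⟩ := hdec f r'' hmem hm
      exact hexmatch r' hr' hm'
    have hne' : MR (src pkt) (dst pkt) ≠ [] := hMR _ _ hne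
    have hnot : ¬ ∀ f ∈ MR (src pkt) (dst pkt),
        firstMatch (deployedList f) pkt = some true := by
      intro h
      have hf0 := h ((MR (src pkt) (dst pkt)).head hne') (List.head_mem hne')
      rw [hnonef] at hf0
      exact absurd hf0 (by simp)
    constructor
    · constructor
      · intro h; exact absurd h hnot
      · rintro ⟨r', hr', _, hm'⟩; exact absurd hm' (hexmatch r' hr')
    · exact ⟨fun _ => Or.inr hexmatch, fun _ => hnot⟩
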